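/- If s₁, s₂, s₃, u₁, u₂ ∈ (−1/6, 1/6), then in SL(2,ℝ) one has the decomposition B_{s₁} C_{u₁} B_{s₂} C_{u₂} B_{s₃} = C_u B_s A_τ, where ρ = u₂(s₁ + s₂) + u₁ s₁ (1 + u₂ s₂) satisfies 1 + ρ > 0, and u = u₁ + u₂ + (u₁ u₂ s₂ − (u₁ + u₂) ρ)/(1 + ρ), s = s₁ + s₂ + s₃ + ρ((2 + ρ) s₃ + s₁ + s₂) + u₁ s₁ s₂ (1 + ρ), τ = 2 ln(1 + ρ). -/

import Mathlib

noncomputable section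

open Real

abbrev SL2 : Type := Matrix.SpecialLinearGroup (Fin 2) ℝ

def Amat (t : ℝ) : SL2 :=
  ⟨!![Real.exp (t / 2), 0; 0, Real.exp (-(t / 2))], by
    simp [Matrix.det_fin_two_of, ← Real.exp_add]⟩

def Bmat (t : ℝ) : SL2 :=
  ⟨!![1, t; 0, 1], by simp [Matrix.det_fin_two_of]⟩

def Cmat (t : ℝ) : SL2 :=
  ⟨!![1, 0; t, 1], by simp [Matrix.det_fin_two_of]⟩

set_option maxHeartbeats 1000000 in
theorem stmt_8 (s₁ s₂ s₃ u₁ u₂ ρ : ℝ)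
    (hs₁ : s₁ ∈ Set.Ioo (-(1/6) : ℝ) (1/6)) (hs₂ : s₂ ∈ Set.Ioo (-(1/6) : ℝ) (1/6))
    (hs₃ : s₃ ∈ Set.Ioo (-(1/6) : ℝ) (1/6)) (hu₁ : u₁ ∈ Set.Ioo (-(1/6) : ℝ) (1/6))
    (hu₂ : u₂ ∈ Set.Ioo (-(1/6) : ℝ) (1/6))
    (hρ : ρ = u₂ * (s₁ + s₂) + u₁ * s₁ * (1 + u₂ * s₂)) :
    0 < 1 + ρ ∧
    Bmat s₁ * Cmat u₁ * Bmat s₂ * Cmat u₂ * Bmat s₃ =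
      Cmat (u₁ + u₂ + (u₁ * u₂ * s₂ - (u₁ + u₂) * ρ) / (1 + ρ)) *
        Bmat (s₁ + s₂ + s₃ + ρ * ((2 + ρ) * s₃ + s₁ + s₂) + u₁ * s₁ * s₂ * (1 + ρ)) *
        Amat (2 * Real.log (1 + ρ)) := by
  obtain ⟨a1,a2⟩ := hs₁
  obtain ⟨b1,b2⟩ := hs₂
  obtain ⟨c1,c2⟩ := hs₃
  obtain ⟨d1,d2⟩ := hu₁
  obtain ⟨e1,e2⟩ := hu₂
  have hpos : 0 < 1 + ρ := by
    rw [hρ]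
    nlinarith [mul_pos (sub_pos.2 d2) (sub_pos.2 a2), mul_pos (sub_pos.2 e2) (sub_pos.2 b2),
      mul_pos (sub_pos.2 e2) (sub_pos.2 a2),
      mul_pos (by linarith : (0:ℝ) < 1/6 + u₁) (by linarith : (0:ℝ) < 1/6 + s₁),
      mul_pos (by linarith : (0:ℝ) < 1/6 + u₂) (by linarith : (0:ℝ) < 1/6 + s₂),
      mul_pos (by linarith : (0:ℝ) < 1/6 + u₂) (by linarith : (0:ℝ) < 1/6 + s₁),
      sq_nonneg (u₁*s₁), sq_nonneg (u₂*s₂), sq_nonneg (u₂*s₁)]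
  refine ⟨hpos, ?_⟩
  have hne : (1 + ρ) ≠ 0 := ne_of_gt hpos
  ext i j
  simp only [Matrix.SpecialLinearGroup.coe_mul, Matrix.mul_apply,
    Fin.sum_univ_two]
  simp only [Amat, Bmat, Cmat]
  fin_cases i <;> fin_cases j <;>
    simp only [Matrix.of_apply, Fin.zero_eta, Fin.mk_one, Matrix.cons_val', Matrix.cons_val_zero, Matrix.cons_val_one, Matrix.head_cons,
      Matrix.head_fin_const, Matrix.empty_val', Matrix.cons_val_fin_one,
      mul_div_assoc, mul_div_cancel_left₀ _ (two_ne_zero (α := ℝ)),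
      Real.exp_log hpos, Real.exp_neg, mul_zero, zero_mul, add_zero, zero_add, one_mul, mul_one] <;>
    (field_simp; rw [hρ]; ring)
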